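/- Let I be an index set and m : I → ℤ. Then there exists a weighted graph (K, w, A) on some linearly ordered vertex type such that π₁(K, w, A) is isomorphic to the free product (Monoid.CoprodI) of the family of cyclic groups (ℤ/m(i)) indexed by i ∈ I. -/

import Mathlib

open scoped Classical

variable {V : Type*}

/-- Generators of the weighted fundamental group: edges `ab` of `K` with `a < b`. -/
def WGen [LinearOrder V] (K : SimpleGraph V) : Type _ :=
  {p : V × V // p.1 < p.2 ∧ K.Adj p.1 p.2}

/-- The relators of the weighted fundamental group: (1) `g_{ab}^{w(ab)}` for edges of the
spanning tree `A`; (2) `g_{ab}^{w(ab)} · (g_{av}^{w(av)} · g_{vb}^{w(vb)})⁻¹` for 2-simplices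
`{a, v, b} ∈ T` with `a < v < b`. -/
def WRelators [LinearOrder V] (K : SimpleGraph V) (T : Set (Finset V))
    (w : Sym2 V → ℤ) (A : SimpleGraph V) : Set (FreeGroup (WGen K)) :=
  {r | ∃ e : WGen K, A.Adj e.1.1 e.1.2 ∧ r = FreeGroup.of e ^ w s(e.1.1, e.1.2)} ∪
  {r | ∃ (a v b : V) (hav : a < v) (hvb : v < b)
       (h1 : K.Adj a v) (h2 : K.Adj v b) (h3 : K.Adj a b),
       ({a, v, b} : Finset V) ∈ T ∧
       r = FreeGroup.of (⟨(a, b), hav.trans hvb, h3⟩ : WGen K) ^ w s(a, b) *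
         (FreeGroup.of (⟨(a, v), hav, h1⟩ : WGen K) ^ w s(a, v) *
          FreeGroup.of (⟨(v, b), hvb, h2⟩ : WGen K) ^ w s(v, b))⁻¹}

/-- The weighted fundamental group `π₁(K, w, A)` of the WSC `(K, T, w, A)`,
as a presented group. -/
def wpi1 [LinearOrder V] (K : SimpleGraph V) (T : Set (Finset V))
    (w : Sym2 V → ℤ) (A : SimpleGraph V) : Type _ :=
  PresentedGroup (WRelators K T w A)

noncomputable instance [LinearOrder V] (K : SimpleGraph V) (T : Set (Finset V))
    (w : Sym2 V → ℤ) (A : SimpleGraph V) : Group (wpi1 K T w A) := by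
  unfold wpi1; infer_instance

/-- `(K, T, w, A)` is a weighted simplicial complex: `K` is a connected simple graph,
`T` is a set of 2-simplices (unordered triples of distinct pairwise adjacent vertices),
and `A` is a spanning tree of `K`. -/
structure IsWSC (K : SimpleGraph V) (T : Set (Finset V))
    (w : Sym2 V → ℤ) (A : SimpleGraph V) : Prop where
  conn : K.Connected
  tri : ∀ t ∈ T, ∃ a v b : V, a ≠ v ∧ v ≠ b ∧ a ≠ b ∧ t = {a, v, b} ∧
        K.Adj a v ∧ K.Adj v b ∧ K.Adj a b
  tree : A.IsTree
  le : A ≤ K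

/-- Exactly two of the three edges of every 2-simplex of `T` lie in the tree `A`. -/
def ExactlyTwo [LinearOrder V] (T : Set (Finset V)) (A : SimpleGraph V) : Prop :=
  ∀ a v b : V, a < v → v < b → ({a, v, b} : Finset V) ∈ T →
    ((if A.Adj a b then 1 else 0) + (if A.Adj a v then 1 else 0) +
      (if A.Adj v b then 1 else 0) : ℕ) = 2


section Aux
universe u
variable {I : Type u} [LinearOrder I]

/-- The star graph on `WithBot I` with center `⊥`. -/
def starG (I : Type u) [LinearOrder I] : SimpleGraph (WithBot I) where
  Adj a b := (a = ⊥ ∧ b ≠ ⊥) ∨ (b = ⊥ ∧ a ≠ ⊥)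
  symm := by tauto
  loopless := ⟨by intro a h; tauto⟩

lemma starG_connected : (starG I).Connected := by
  rw [SimpleGraph.connected_iff]
  refine ⟨fun u v => ?_, ⟨⊥⟩⟩
  have key : ∀ x : WithBot I, (starG I).Reachable x ⊥ := by
    intro x
    by_cases hx : x = ⊥
    · exact hx ▸ SimpleGraph.Reachable.refl _
    · exact (SimpleGraph.Adj.reachable (Or.inr ⟨rfl, hx⟩))
  exact (key u).trans (key v).symm

lemma starG_walk_mem : ∀ {u b : WithBot I} (p : (starG I).Walk u b), b ≠ ⊥ →
    u = b ∨ s(⊥, b) ∈ p.edges := by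
  intro u b p
  induction p with
  | nil => exact fun _ => Or.inl rfl
  | cons h q ih =>
    intro hb
    rcases ih hb with h1 | h1
    · subst h1
      rcases h with ⟨h2, h3⟩ | ⟨h2, h3⟩
      · subst h2
        exact Or.inr List.mem_cons_self
      · exact absurd h2 hb
    · exact Or.inr (by simp [h1])

lemma starG_acyclic : (starG I).IsAcyclic := by
  rw [SimpleGraph.isAcyclic_iff_forall_adj_isBridge]
  intro v w hvw
  have key : ∀ x : WithBot I, x ≠ ⊥ → (starG I).IsBridge s(⊥, x) := by
    intro x hx
    rw [SimpleGraph.isBridge_iff_adj_and_forall_walk_mem_edges]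
    refine fun p => ?_
    rcases starG_walk_mem p hx with h | h
    · exact absurd h.symm hx
    · exact h
  rcases hvw with ⟨h1, h2⟩ | ⟨h1, h2⟩
  · subst h1; exact key w h2
  · subst h1
    rw [Sym2.eq_swap]
    exact key v h2

variable (m : I → ℤ)

/-- The weight function: `w(⊥, i) = m i`. -/
noncomputable def wt : Sym2 (WithBot I) → ℤ :=
  Sym2.lift ⟨fun a b => WithBot.recBotCoe 0 m a + WithBot.recBotCoe 0 m b,
    fun a b => add_comm _ _⟩

lemma wt_bot_coe (i : I) : wt m s(⊥, (i : WithBot I)) = m i := by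
  simp [wt]

/-- The generator corresponding to the edge `(⊥, i)`. -/
def gen (i : I) : WGen (starG I) :=
  ⟨(⊥, (i : WithBot I)), WithBot.bot_lt_coe i, Or.inl ⟨rfl, WithBot.coe_ne_bot⟩⟩

lemma gen_surj (e : WGen (starG I)) : ∃ i : I, e = gen i := by
  obtain ⟨⟨a, b⟩, hab, hadj⟩ := e
  rcases hadj with ⟨h1, h2⟩ | ⟨h1, h2⟩
  · obtain ⟨i, rfl⟩ := WithBot.ne_bot_iff_exists.mp h2
    exact ⟨i, Subtype.ext (by simp [gen, Prod.ext_iff]; exact h1)⟩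
  · exact absurd (h1 ▸ hab) (WithBot.not_lt_bot a)

def idx (e : WGen (starG I)) : I :=
  (e.1.2).unbot (fun hb => (WithBot.not_lt_bot e.1.1) (hb ▸ e.2.1))

lemma idx_gen (i : I) : idx (gen (I := I) i) = i := rfl

/-- Homs out of `Multiplicative (ZMod n)` are determined by the value at `ofAdd 1`. -/
lemma mulext {n : ℕ} {G : Type*} [Group G] {f g : Multiplicative (ZMod n) →* G}
    (h : f (Multiplicative.ofAdd 1) = g (Multiplicative.ofAdd 1)) : f = g := by
  refine MonoidHom.ext fun x => ?_
  have hx : x = Multiplicative.ofAdd ((ZMod.cast x.toAdd : ℤ) • (1 : ZMod n)) := by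
    simp [ZMod.intCast_zmod_cast]
  rw [hx]
  have key : ∀ (φ : Multiplicative (ZMod n) →* G) (k : ℤ),
      φ (Multiplicative.ofAdd (k • (1 : ZMod n))) = φ (Multiplicative.ofAdd 1) ^ k := by
    intro φ k
    rw [← map_zpow, ← ofAdd_zsmul]
  rw [key, key, h]

lemma mem_rels (i : I) :
    FreeGroup.of (gen i) ^ m i ∈ WRelators (starG I) (∅ : Set (Finset (WithBot I))) (wt m) (starG I) :=
  Or.inl ⟨gen i, (gen i).2.2, by rw [show s((gen (I := I) i).1.1, (gen (I := I) i).1.2) =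
    s((⊥ : WithBot I), (i : WithBot I)) from rfl, wt_bot_coe]⟩

lemma rels_char {r : FreeGroup (WGen (starG I))}
    (hr : r ∈ WRelators (starG I) (∅ : Set (Finset (WithBot I))) (wt m) (starG I)) :
    ∃ i : I, r = FreeGroup.of (gen i) ^ m i := by
  rcases hr with ⟨e, _, rfl⟩ | ⟨a, v, b, _, _, _, _, _, h, _⟩
  · obtain ⟨i, rfl⟩ := gen_surj e
    exact ⟨i, by rw [show s((gen (I := I) i).1.1, (gen (I := I) i).1.2) =
      s((⊥ : WithBot I), (i : WithBot I)) from rfl, wt_bot_coe]⟩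
  · exact absurd h (Set.notMem_empty _)

/-- The generator `gᵢ` as an element of the presented group. -/
noncomputable def xg (i : I) : PresentedGroup
    (WRelators (starG I) (∅ : Set (Finset (WithBot I))) (wt m) (starG I)) :=
  PresentedGroup.of (gen i)

lemma xg_pow (i : I) : xg m i ^ m i = 1 := by
  have h : (PresentedGroup.mk _) (FreeGroup.of (gen i) ^ m i) = 1 :=
    (QuotientGroup.eq_one_iff _).mpr (Subgroup.subset_normalClosure (mem_rels m i))
  rw [map_zpow] at h; exact h

lemma xg_pow_natAbs (i : I) : xg m i ^ ((m i).natAbs : ℤ) = 1 := by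
  rcases Int.natAbs_eq (m i) with h | h
  · rw [← h]; exact xg_pow m i
  · have : ((m i).natAbs : ℤ) = -(m i) := by omega
    rw [this, zpow_neg, xg_pow, inv_one]

/-- The component hom `Multiplicative (ZMod |m i|) →* G₁` sending `ofAdd 1` to `xg i`. -/
noncomputable def zeta (i : I) : Multiplicative (ZMod (m i).natAbs) →* PresentedGroup
    (WRelators (starG I) (∅ : Set (Finset (WithBot I))) (wt m) (starG I)) :=
  AddMonoidHom.toMultiplicativeLeft
    (ZMod.lift (m i).natAbs ⟨MonoidHom.toAdditiveRight (zpowersHom _ (xg m i)), by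
      show Additive.ofMul (xg m i ^ (((m i).natAbs : ℤ))) = 0
      rw [xg_pow_natAbs]; rfl⟩)

lemma zeta_ofAdd_one (i : I) : zeta m i (Multiplicative.ofAdd 1) = xg m i := by
  have h1 : (1 : ZMod (m i).natAbs) = (((1 : ℤ) : ZMod (m i).natAbs)) := by simp
  simp only [zeta, AddMonoidHom.coe_toMultiplicativeLeft, Function.comp_apply, toAdd_ofAdd, h1,
    ZMod.lift_coe, MonoidHom.coe_toAdditiveRight, zpowersHom_apply, zpow_one]
  rfl

lemma coprodI_of_pow (j : I) :
    (Monoid.CoprodI.of (M := fun i : I => Multiplicative (ZMod (m i).natAbs))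
      (Multiplicative.ofAdd (1 : ZMod (m j).natAbs))) ^ (m j) = 1 := by
  rw [← map_zpow, ← ofAdd_zsmul]
  have h : (m j) • (1 : ZMod (m j).natAbs) = 0 := by
    rw [zsmul_eq_mul, mul_one]
    exact (ZMod.intCast_zmod_eq_zero_iff_dvd _ _).mpr (Int.natAbs_dvd.mpr dvd_rfl)
  rw [h]
  simp

end Aux

/-- Proposition 3.5. Every free product of cyclic groups `⨿ᵢ ℤ/m(i)` is the
weighted fundamental group of some weighted graph. -/
theorem free_product_cyclic_realizable.{u} (I : Type u) (m : I → ℤ) :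
    ∃ (W : Type u) (_ : LinearOrder W) (K : SimpleGraph W) (w : Sym2 W → ℤ)
      (A : SimpleGraph W), IsWSC K (∅ : Set (Finset W)) w A ∧
      Nonempty (wpi1 K (∅ : Set (Finset W)) w A ≃*
        Monoid.CoprodI (fun i : I => Multiplicative (ZMod (m i).natAbs))) := by
  letI : LinearOrder I := IsWellOrder.linearOrder WellOrderingRel
  refine ⟨WithBot I, inferInstance, starG I, wt m, starG I,
    ⟨starG_connected, fun t ht => absurd ht (Set.notMem_empty t),
      ⟨starG_connected, starG_acyclic⟩, le_refl _⟩, ?_⟩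
  -- the forward homomorphism
  have hrel : ∀ r ∈ WRelators (starG I) (∅ : Set (Finset (WithBot I))) (wt m) (starG I),
      FreeGroup.lift (fun e : WGen (starG I) =>
        Monoid.CoprodI.of (M := fun i : I => Multiplicative (ZMod (m i).natAbs))
          (Multiplicative.ofAdd (1 : ZMod (m (idx e)).natAbs))) r = 1 := by
    intro r hr
    obtain ⟨i, rfl⟩ := rels_char m hr
    rw [map_zpow, FreeGroup.lift_apply_of]
    exact coprodI_of_pow m i
  let φ : PresentedGroup (WRelators (starG I) (∅ : Set (Finset (WithBot I))) (wt m) (starG I)) →*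
      Monoid.CoprodI (fun i : I => Multiplicative (ZMod (m i).natAbs)) :=
    PresentedGroup.toGroup hrel
  let ψ : Monoid.CoprodI (fun i : I => Multiplicative (ZMod (m i).natAbs)) →*
      PresentedGroup (WRelators (starG I) (∅ : Set (Finset (WithBot I))) (wt m) (starG I)) :=
    Monoid.CoprodI.lift (zeta m)
  have h1 : ψ.comp φ = MonoidHom.id _ := by
    apply PresentedGroup.ext
    intro e
    obtain ⟨i, rfl⟩ := gen_surj e
    show ψ (φ (PresentedGroup.of (gen i))) = PresentedGroup.of (gen i)
    rw [show φ (PresentedGroup.of (gen i)) =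
        Monoid.CoprodI.of (M := fun i : I => Multiplicative (ZMod (m i).natAbs)) (Multiplicative.ofAdd (1 : ZMod (m i).natAbs)) from
      PresentedGroup.toGroup.of hrel]
    rw [show ψ (Monoid.CoprodI.of (M := fun i : I => Multiplicative (ZMod (m i).natAbs)) (Multiplicative.ofAdd (1 : ZMod (m i).natAbs))) =
        zeta m i (Multiplicative.ofAdd 1) from Monoid.CoprodI.lift_of _ _]
    rw [zeta_ofAdd_one]
    rfl
  have h2 : φ.comp ψ = MonoidHom.id _ := by
    apply Monoid.CoprodI.ext_hom
    intro i
    apply mulext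
    show φ (ψ (Monoid.CoprodI.of (M := fun i : I => Multiplicative (ZMod (m i).natAbs)) (Multiplicative.ofAdd (1 : ZMod (m i).natAbs)))) =
      Monoid.CoprodI.of (M := fun i : I => Multiplicative (ZMod (m i).natAbs)) (Multiplicative.ofAdd (1 : ZMod (m i).natAbs))
    rw [show ψ (Monoid.CoprodI.of (M := fun i : I => Multiplicative (ZMod (m i).natAbs)) (Multiplicative.ofAdd (1 : ZMod (m i).natAbs))) =
        zeta m i (Multiplicative.ofAdd 1) from Monoid.CoprodI.lift_of _ _]
    rw [zeta_ofAdd_one]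
    rw [show φ (xg m i) =
        Monoid.CoprodI.of (M := fun i : I => Multiplicative (ZMod (m i).natAbs)) (Multiplicative.ofAdd (1 : ZMod (m i).natAbs)) from
      PresentedGroup.toGroup.of hrel]
  exact ⟨MonoidHom.toMulEquiv φ ψ h1 h2⟩
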